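/- In the Hopf algebra H of binary forests graded by number of leaves, the antipode satisfies: every term in S(T) is a forest arising from a binary-total cut of T, the sign of its coefficient is (−1)^{(number of trees in the forest)}, and the sum of the absolute values of the coefficients in S(T) equals 3^{n−1} for a tree T with n leaves. -/

import Mathlib

/-- Full binary rooted trees. -/
inductive BTree : Type
  | leaf : BTree
  | node : BTree → BTree → BTree
  deriving DecidableEq

namespace BTree

def leafCount : BTree → ℕ
  | leaf => 1
  | node l r => leafCount l + leafCount r

/-- Isomorphism of rooted nonplanar binary trees. -/
inductive Iso : BTree → BTree → Prop
  | leaf : Iso leaf leaf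
  | node {a b c d : BTree} : Iso a c → Iso b d → Iso (node a b) (node c d)
  | swap {a b c d : BTree} : Iso a d → Iso b c → Iso (node a b) (node c d)

/-- Positions of the leaves of a tree. -/
def leafPos : BTree → List (List Bool)
  | leaf => [[]]
  | node l r => (leafPos l).map (List.cons false) ++ (leafPos r).map (List.cons true)

/-- The pruned forest `F_A` of the cut given by the leaf subset `A = {ℓ | p ℓ}`. -/
def maxSub (p : List Bool → Bool) : BTree → List Bool → List BTree
  | leaf, q => if p q then [leaf] else []
  | node l r, q =>
      if (leafPos (node l r)).all (fun s => p (q ++ s)) then [node l r]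
      else maxSub p l (q ++ [false]) ++ maxSub p r (q ++ [true])

/-- The remainder `T/A`, contracted back to a full binary tree. -/
def quotA (p : List Bool → Bool) : BTree → List Bool → Option BTree
  | leaf, q => if p q then none else some leaf
  | node l r, q =>
      match quotA p l (q ++ [false]), quotA p r (q ++ [true]) with
      | some l', some r' => some (node l' r')
      | some l', none => some l'
      | none, some r' => some r'
      | none, none => none

/-- All binary-total cuts of a tree, enumerated by choosing at each internal
vertex to cut the left child-edge, the right child-edge, or neither; each
entry is (root component after contraction, multiset of severed pieces after
contraction). -/
def tc : BTree → List (BTree × Multiset BTree)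
  | leaf => [(leaf, 0)]
  | node l r =>
      (tc l).flatMap fun pl => (tc r).flatMap fun pr =>
        [(node pl.1 pr.1, pl.2 + pr.2),
         (pr.1, pl.1 ::ₘ (pl.2 + pr.2)),
         (pl.1, pr.1 ::ₘ (pl.2 + pr.2))]

end BTree

noncomputable section

/-- The Hopf algebra `H` of binary forests: polynomial algebra on binary trees. -/
abbrev V : Type := AddMonoidAlgebra ℚ (Multiset BTree)

noncomputable def fδ (m : Multiset BTree) : V := AddMonoidAlgebra.ofCoeff (Finsupp.single m 1)

def optForest : Option BTree → Multiset BTree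
  | none => 0
  | some t => {t}

namespace Aux
open BTree

lemma leafCount_pos (T : BTree) : 0 < T.leafCount := by
  induction T with
  | leaf => simp [leafCount]
  | node l r ihl ihr => simp [leafCount]; omega

lemma leafPos_length (T : BTree) : (leafPos T).length = T.leafCount := by
  induction T with
  | leaf => rfl
  | node l r ihl ihr => simp [leafPos, leafCount, ihl, ihr]

lemma leafPos_ne_nil (T : BTree) : leafPos T ≠ [] := by
  intro h
  have h1 := leafPos_length T
  have h2 := leafCount_pos T
  rw [h] at h1
  simp at h1
  omega

lemma leafPos_nodup (T : BTree) : (leafPos T).Nodup := by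
  induction T with
  | leaf => simp [leafPos]
  | node l r ihl ihr =>
    refine List.Nodup.append (ihl.map ?_) (ihr.map ?_) ?_
    · intro a b h; injection h
    · intro a b h; injection h
    · intro x hx hy
      simp only [List.mem_map] at hx hy
      obtain ⟨a, -, rfl⟩ := hx
      obtain ⟨b, -, hb⟩ := hy
      exact absurd hb (by simp)

lemma Iso_refl (T : BTree) : Iso T T := by
  induction T with
  | leaf => exact .leaf
  | node l r ihl ihr => exact .node ihl ihr

lemma rel_iso_refl (m : Multiset BTree) : Multiset.Rel Iso m m := by
  induction m using Multiset.induction_on with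
  | empty => exact Multiset.Rel.zero
  | cons a s ih => exact Multiset.Rel.cons (Iso_refl a) ih

end Aux
namespace Aux
open BTree

lemma list_all_congr {α : Type*} {f g : α → Bool} :
    ∀ (L : List α), (∀ s ∈ L, f s = g s) → L.all f = L.all g := by
  intro L
  induction L with
  | nil => intro _; rfl
  | cons a t ih =>
    intro h
    simp only [List.all_cons, h a (by simp), ih (fun s hs => h s (by simp [hs]))]

lemma mem_leafPos_left {s : List Bool} {l r : BTree} (hs : s ∈ leafPos l) :
    (false :: s) ∈ leafPos (node l r) := by
  simp only [leafPos, List.mem_append, List.mem_map]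
  exact Or.inl ⟨s, hs, rfl⟩

lemma mem_leafPos_right {s : List Bool} {l r : BTree} (hs : s ∈ leafPos r) :
    (true :: s) ∈ leafPos (node l r) := by
  simp only [leafPos, List.mem_append, List.mem_map]
  exact Or.inr ⟨s, hs, rfl⟩

lemma maxSub_congr {p p' : List Bool → Bool} :
    ∀ (X : BTree) (q : List Bool),
      (∀ s ∈ leafPos X, p (q ++ s) = p' (q ++ s)) → maxSub p X q = maxSub p' X q := by
  intro X
  induction X with
  | leaf =>
    intro q h
    have := h [] (by simp [leafPos])
    simp only [List.append_nil] at this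
    simp [maxSub, this]
  | node l r ihl ihr =>
    intro q h
    have hc : ((leafPos (node l r)).all fun s => p (q ++ s)) =
        ((leafPos (node l r)).all fun s => p' (q ++ s)) :=
      list_all_congr _ h
    have hl : maxSub p l (q ++ [false]) = maxSub p' l (q ++ [false]) := by
      refine ihl _ (fun s hs => ?_)
      simpa [List.append_assoc] using h (false :: s) (mem_leafPos_left hs)
    have hr : maxSub p r (q ++ [true]) = maxSub p' r (q ++ [true]) := by
      refine ihr _ (fun s hs => ?_)
      simpa [List.append_assoc] using h (true :: s) (mem_leafPos_right hs)
    rw [maxSub, maxSub, hc, hl, hr]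

lemma quotA_congr {p p' : List Bool → Bool} :
    ∀ (X : BTree) (q : List Bool),
      (∀ s ∈ leafPos X, p (q ++ s) = p' (q ++ s)) → quotA p X q = quotA p' X q := by
  intro X
  induction X with
  | leaf =>
    intro q h
    have := h [] (by simp [leafPos])
    simp only [List.append_nil] at this
    simp [quotA, this]
  | node l r ihl ihr =>
    intro q h
    have hl : quotA p l (q ++ [false]) = quotA p' l (q ++ [false]) := by
      refine ihl _ (fun s hs => ?_)
      simpa [List.append_assoc] using h (false :: s) (mem_leafPos_left hs)
    have hr : quotA p r (q ++ [true]) = quotA p' r (q ++ [true]) := by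
      refine ihr _ (fun s hs => ?_)
      simpa [List.append_assoc] using h (true :: s) (mem_leafPos_right hs)
    rw [quotA, quotA, hl, hr]

lemma maxSub_shift (p : List Bool → Bool) :
    ∀ (X : BTree) (q0 q : List Bool),
      maxSub p X (q0 ++ q) = maxSub (fun s => p (q0 ++ s)) X q := by
  intro X
  induction X with
  | leaf => intro q0 q; simp [maxSub]
  | node l r ihl ihr =>
    intro q0 q
    rw [maxSub, maxSub]
    have h1 : q0 ++ q ++ [false] = q0 ++ (q ++ [false]) := by simp
    have h2 : q0 ++ q ++ [true] = q0 ++ (q ++ [true]) := by simp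
    rw [h1, h2, ihl, ihr]
    simp [List.append_assoc]

lemma quotA_shift (p : List Bool → Bool) :
    ∀ (X : BTree) (q0 q : List Bool),
      quotA p X (q0 ++ q) = quotA (fun s => p (q0 ++ s)) X q := by
  intro X
  induction X with
  | leaf => intro q0 q; simp [quotA]
  | node l r ihl ihr =>
    intro q0 q
    rw [quotA, quotA]
    have h1 : q0 ++ q ++ [false] = q0 ++ (q ++ [false]) := by simp
    have h2 : q0 ++ q ++ [true] = q0 ++ (q ++ [true]) := by simp
    rw [h1, h2, ihl, ihr]

lemma maxSub_of_false {p : List Bool → Bool} :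
    ∀ (X : BTree) (q : List Bool),
      (∀ s ∈ leafPos X, p (q ++ s) = false) → maxSub p X q = [] := by
  intro X
  induction X with
  | leaf =>
    intro q h
    have := h [] (by simp [leafPos])
    simp only [List.append_nil] at this
    simp [maxSub, this]
  | node l r ihl ihr =>
    intro q h
    have hc : ¬ ((leafPos (node l r)).all fun s => p (q ++ s)) = true := by
      simp only [List.all_eq_true, not_forall]
      obtain ⟨s, hs⟩ := List.exists_mem_of_ne_nil _ (leafPos_ne_nil (node l r))
      exact ⟨s, hs, by simp [h s hs]⟩
    rw [maxSub, if_neg hc]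
    have hl : maxSub p l (q ++ [false]) = [] := by
      refine ihl _ (fun s hs => ?_)
      simpa [List.append_assoc] using h (false :: s) (mem_leafPos_left hs)
    have hr : maxSub p r (q ++ [true]) = [] := by
      refine ihr _ (fun s hs => ?_)
      simpa [List.append_assoc] using h (true :: s) (mem_leafPos_right hs)
    simp [hl, hr]

lemma quotA_of_false {p : List Bool → Bool} :
    ∀ (X : BTree) (q : List Bool),
      (∀ s ∈ leafPos X, p (q ++ s) = false) → quotA p X q = some X := by
  intro X
  induction X with
  | leaf =>
    intro q h
    have := h [] (by simp [leafPos])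
    simp only [List.append_nil] at this
    simp [quotA, this]
  | node l r ihl ihr =>
    intro q h
    have hl : quotA p l (q ++ [false]) = some l := by
      refine ihl _ (fun s hs => ?_)
      simpa [List.append_assoc] using h (false :: s) (mem_leafPos_left hs)
    have hr : quotA p r (q ++ [true]) = some r := by
      refine ihr _ (fun s hs => ?_)
      simpa [List.append_assoc] using h (true :: s) (mem_leafPos_right hs)
    rw [quotA, hl, hr]

lemma maxSub_of_true {p : List Bool → Bool} :
    ∀ (X : BTree) (q : List Bool),
      (∀ s ∈ leafPos X, p (q ++ s) = true) → maxSub p X q = [X] := by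
  intro X
  cases X with
  | leaf =>
    intro q h
    have := h [] (by simp [leafPos])
    simp only [List.append_nil] at this
    simp [maxSub, this]
  | node l r =>
    intro q h
    rw [maxSub, if_pos (by simp only [List.all_eq_true]; exact h)]

lemma quotA_of_true {p : List Bool → Bool} :
    ∀ (X : BTree) (q : List Bool),
      (∀ s ∈ leafPos X, p (q ++ s) = true) → quotA p X q = none := by
  intro X
  induction X with
  | leaf =>
    intro q h
    have := h [] (by simp [leafPos])
    simp only [List.append_nil] at this
    simp [quotA, this]
  | node l r ihl ihr =>
    intro q h
    have hl : quotA p l (q ++ [false]) = none := by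
      refine ihl _ (fun s hs => ?_)
      simpa [List.append_assoc] using h (false :: s) (mem_leafPos_left hs)
    have hr : quotA p r (q ++ [true]) = none := by
      refine ihr _ (fun s hs => ?_)
      simpa [List.append_assoc] using h (true :: s) (mem_leafPos_right hs)
    rw [quotA, hl, hr]

lemma maxSub_sum_leafCount {p : List Bool → Bool} :
    ∀ (X : BTree) (q : List Bool),
      ((maxSub p X q).map leafCount).sum = (leafPos X).countP (fun s => p (q ++ s)) := by
  intro X
  induction X with
  | leaf =>
    intro q
    by_cases h : p q <;>
      simp [maxSub, leafPos, h, leafCount, List.countP_cons, List.append_nil]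
  | node l r ihl ihr =>
    intro q
    rw [maxSub]
    by_cases hc : ((leafPos (node l r)).all fun s => p (q ++ s)) = true
    · rw [if_pos hc]
      have : (leafPos (node l r)).countP (fun s => p (q ++ s)) = (leafPos (node l r)).length := by
        apply List.countP_eq_length.mpr
        intro s hs
        exact (List.all_eq_true.mp hc) s hs
      simp [this, leafPos_length, leafCount]
    · rw [if_neg hc]
      rw [List.map_append, List.sum_append, ihl, ihr]
      rw [leafPos, List.countP_append, List.countP_map, List.countP_map]
      congr 1
      · congr 1
        funext s
        simp [Function.comp, List.append_assoc]
      · congr 1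
        funext s
        simp [Function.comp, List.append_assoc]

end Aux
namespace Aux
open BTree

lemma flatMap_const_length {α β : Type*} (c : ℕ) (L : List α) (f : α → List β)
    (hf : ∀ x, (f x).length = c) : (L.flatMap f).length = c * L.length := by
  induction L with
  | nil => simp
  | cons a t ih => simp [List.flatMap_cons, hf, ih]; ring

lemma tc_length (T : BTree) : (tc T).length = 3 ^ (T.leafCount - 1) := by
  induction T with
  | leaf => rfl
  | node l r ihl ihr =>
    have hlen : ((tc l).flatMap fun pl => (tc r).flatMap fun pr =>
        [(node pl.1 pr.1, pl.2 + pr.2),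
         (pr.1, pl.1 ::ₘ (pl.2 + pr.2)),
         (pl.1, pr.1 ::ₘ (pl.2 + pr.2))]).length = (3 * (tc r).length) * (tc l).length :=
      flatMap_const_length _ _ _ (fun pl => flatMap_const_length _ _ _ (fun pr => rfl))
    rw [tc, hlen, ihl, ihr, leafCount]
    have h1 := leafCount_pos l
    have h2 := leafCount_pos r
    rw [show l.leafCount + r.leafCount - 1 = 1 + (r.leafCount - 1) + (l.leafCount - 1) by omega]
    rw [pow_add, pow_add, pow_one]

noncomputable def Sf (Y : BTree) : V :=
  ((tc Y).map (fun p => ((-1 : ℚ) ^ (1 + Multiset.card p.2)) • fδ (p.1 ::ₘ p.2))).sum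

noncomputable def prodF (L : List BTree) : V := (L.map Sf).prod

lemma fδ_zero : fδ 0 = 1 := rfl

lemma fδ_add (a b : Multiset BTree) : fδ (a + b) = fδ a * fδ b := by
  simp [fδ, AddMonoidAlgebra.ofCoeff_single, AddMonoidAlgebra.single_mul_single]

lemma fδ_list (L : List BTree) :
    fδ ↑L = (L.map (fun t => fδ ({t} : Multiset BTree))).prod := by
  induction L with
  | nil => simpa using fδ_zero
  | cons a t ih =>
    have : ((a :: t : List BTree) : Multiset BTree) = {a} + ↑t := by
      simp [Multiset.singleton_add]
    rw [this, fδ_add, ih, List.map_cons, List.prod_cons]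

end Aux
namespace Aux
open BTree

def comb : Option BTree → Option BTree → Option BTree
  | some a, some b => some (node a b)
  | some a, none => some a
  | none, some b => some b
  | none, none => none

noncomputable def Ef (f : Option BTree →₀ V) : V :=
  f.sum fun k v => v * fδ (optForest k)

lemma Ef_single (k : Option BTree) (v : V) : Ef (Finsupp.single k v) = v * fδ (optForest k) := by
  rw [Ef, Finsupp.sum_single_index]
  simp

lemma Ef_add (f g : Option BTree →₀ V) : Ef (f + g) = Ef f + Ef g := by
  rw [Ef, Ef, Ef]
  apply Finsupp.sum_add_index' <;> intros <;> simp [add_mul]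

noncomputable def EH : (Option BTree →₀ V) →+ V := AddMonoidHom.mk' Ef Ef_add

noncomputable def B2 (f g : Option BTree →₀ V) : Option BTree →₀ V :=
  f.sum fun k v => g.sum fun k' w => Finsupp.single (comb k k') (v * w)

lemma B2_single_single (k k' : Option BTree) (v w : V) :
    B2 (Finsupp.single k v) (Finsupp.single k' w) =
      Finsupp.single (comb k k') (v * w) := by
  rw [B2, Finsupp.sum_single_index, Finsupp.sum_single_index]
  · simp
  · rw [Finsupp.sum_single_index] <;> simp

lemma B2_add_left (f₁ f₂ g : Option BTree →₀ V) :
    B2 (f₁ + f₂) g = B2 f₁ g + B2 f₂ g := by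
  rw [B2, B2, B2]
  apply Finsupp.sum_add_index' <;> intros <;>
    simp [add_mul, Finsupp.single_add, Finsupp.sum_add]

lemma B2_add_right (f g₁ g₂ : Option BTree →₀ V) :
    B2 f (g₁ + g₂) = B2 f g₁ + B2 f g₂ := by
  rw [B2, B2, B2, ← Finsupp.sum_add]
  apply Finsupp.sum_congr
  intro k _
  apply Finsupp.sum_add_index' <;> intros <;> simp [mul_add, Finsupp.single_add]

noncomputable def B2l (g : Option BTree →₀ V) : (Option BTree →₀ V) →+ (Option BTree →₀ V) :=
  AddMonoidHom.mk' (fun f => B2 f g) (fun f₁ f₂ => B2_add_left f₁ f₂ g)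

noncomputable def B2r (f : Option BTree →₀ V) : (Option BTree →₀ V) →+ (Option BTree →₀ V) :=
  AddMonoidHom.mk' (fun g => B2 f g) (fun g₁ g₂ => B2_add_right f g₁ g₂)

lemma B2_zero_left (g : Option BTree →₀ V) : B2 0 g = 0 := by
  simp [B2]

lemma B2_zero_right (f : Option BTree →₀ V) : B2 f 0 = 0 := by
  simp [B2]

lemma B2_sub_left (f₁ f₂ g : Option BTree →₀ V) :
    B2 (f₁ - f₂) g = B2 f₁ g - B2 f₂ g := by
  have := (B2l g).map_sub f₁ f₂
  simpa [B2l] using this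

lemma B2_sub_right (f g₁ g₂ : Option BTree →₀ V) :
    B2 f (g₁ - g₂) = B2 f g₁ - B2 f g₂ := by
  have := (B2r f).map_sub g₁ g₂
  simpa [B2r] using this

end Aux
namespace Aux
open BTree

lemma list_sum_map_flatMap {α β M : Type*} [AddCommMonoid M] (L : List α) (f : α → List β)
    (F : β → M) :
    ((L.flatMap f).map F).sum = (L.map (fun a => ((f a).map F).sum)).sum := by
  induction L with
  | nil => simp
  | cons a t ih => simp [List.flatMap_cons, List.map_append, List.sum_append, ih]

lemma list_sum_map_add {α M : Type*} [AddCommMonoid M] (L : List α) (f g : α → M) :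
    (L.map fun x => f x + g x).sum = (L.map f).sum + (L.map g).sum := by
  induction L with
  | nil => simp
  | cons a t ih => simp [ih]; abel

lemma list_sum_map_sub {α M : Type*} [AddCommGroup M] (L : List α) (f g : α → M) :
    (L.map fun x => f x - g x).sum = (L.map f).sum - (L.map g).sum := by
  induction L with
  | nil => simp
  | cons a t ih => simp [ih]; abel

lemma single_list_sum {α β M : Type*} [DecidableEq β] [AddCommMonoid M] (k : β) (L : List α)
    (f : α → M) :
    Finsupp.single k ((L.map f).sum) = (L.map fun x => Finsupp.single k (f x)).sum := by
  induction L with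
  | nil => simp
  | cons a t ih => simp [Finsupp.single_add, ih]

lemma B2_listsum_left {α : Type*} (L : List α) (f : α → (Option BTree →₀ V))
    (g : Option BTree →₀ V) :
    B2 ((L.map f).sum) g = (L.map fun x => B2 (f x) g).sum := by
  induction L with
  | nil => simp [B2_zero_left]
  | cons a t ih => simp [B2_add_left, ih]

lemma B2_listsum_right {α : Type*} (L : List α) (f : Option BTree →₀ V)
    (g : α → (Option BTree →₀ V)) :
    B2 f ((L.map g).sum) = (L.map fun x => B2 f (g x)).sum := by
  induction L with
  | nil => simp [B2_zero_right]
  | cons a t ih => simp [B2_add_right, ih]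

noncomputable def nT (Y : BTree) : Option BTree →₀ V :=
  ((tc Y).map (fun p =>
    Finsupp.single (some p.1) (((-1 : ℚ) ^ (1 + Multiset.card p.2)) • fδ p.2))).sum

lemma smul_fδ_mul (c d : ℚ) (x y : Multiset BTree) :
    (c • fδ x) * (d • fδ y) = (c * d) • fδ (x + y) := by
  rw [fδ_add, smul_mul_assoc, mul_smul_comm, smul_smul]

lemma list_sum_comm {α β M : Type*} [AddCommMonoid M] (L : List α) (K : List β)
    (f : α → β → M) :
    (L.map fun a => ((K.map fun b => f a b).sum)).sum
      = (K.map fun b => ((L.map fun a => f a b).sum)).sum := by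
  induction L with
  | nil => simp
  | cons a t ih =>
    simp only [List.map_cons, List.sum_cons, ih, ← list_sum_map_add]

lemma nT_node (l r : BTree) :
    nT (node l r) =
      B2 (Finsupp.single none (Sf l)) (nT r) + B2 (nT l) (Finsupp.single none (Sf r))
        - B2 (nT l) (nT r) := by
  simp only [nT, Sf, tc, list_sum_map_flatMap, single_list_sum, B2_listsum_left,
    B2_listsum_right]
  rw [list_sum_comm (tc l) (tc r)]
  rw [← list_sum_map_add, ← list_sum_map_sub]
  congr 1
  apply List.map_congr_left
  intro pr _
  rw [← list_sum_map_add, ← list_sum_map_sub]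
  congr 1
  apply List.map_congr_left
  intro pl _
  obtain ⟨a, m⟩ := pl
  obtain ⟨b, k⟩ := pr
  simp only [List.map_cons, List.map_nil, List.sum_cons, List.sum_nil, add_zero]
  rw [B2_single_single, B2_single_single, B2_single_single]
  rw [smul_fδ_mul, smul_fδ_mul, smul_fδ_mul]
  have m1 : (a ::ₘ m) + k = a ::ₘ (m + k) := by
    rw [Multiset.cons_add]
  have m2 : m + (b ::ₘ k) = b ::ₘ (m + k) := by
    rw [add_comm, Multiset.cons_add, add_comm m k]
  have c1 : comb none (some b) = some b := rfl
  have c2 : comb (some a) none = some a := rfl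
  have c3 : comb (some a) (some b) = some (node a b) := rfl
  rw [c1, c2, c3, m1, m2]
  have hc1 : ((-1 : ℚ) ^ (1 + Multiset.card ((m : Multiset BTree) + k)))
      = -(((-1 : ℚ) ^ (1 + Multiset.card m)) * ((-1 : ℚ) ^ (1 + Multiset.card k))) := by
    rw [← pow_add,
      show (1 + Multiset.card m) + (1 + Multiset.card k)
        = (1 + Multiset.card ((m : Multiset BTree) + k)) + 1 by
          simp [Multiset.card_add]; omega,
      pow_succ]
    ring
  have hc2 : ((-1 : ℚ) ^ (1 + Multiset.card (a ::ₘ (m + k))))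
      = ((-1 : ℚ) ^ (1 + Multiset.card m)) * ((-1 : ℚ) ^ (1 + Multiset.card k)) := by
    rw [← pow_add]
    congr 1
    simp [Multiset.card_cons, Multiset.card_add]
    omega
  have hc3 : ((-1 : ℚ) ^ (1 + Multiset.card (b ::ₘ (m + k))))
      = ((-1 : ℚ) ^ (1 + Multiset.card m)) * ((-1 : ℚ) ^ (1 + Multiset.card k)) := by
    rw [← pow_add]
    congr 1
    simp [Multiset.card_cons, Multiset.card_add]
    omega
  rw [hc1, hc2, hc3, neg_smul, Finsupp.single_neg]
  abel

end Aux
namespace Aux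
open BTree

lemma prodF_nil : prodF [] = 1 := rfl

lemma prodF_singleton (X : BTree) : prodF [X] = Sf X := by
  simp [prodF]

lemma prodF_append (L K : List BTree) : prodF (L ++ K) = prodF L * prodF K := by
  simp [prodF]

lemma full_node (l r : BTree) :
    (leafPos (node l r)).toFinset =
      ((leafPos l).toFinset.image (List.cons false)) ∪
        ((leafPos r).toFinset.image (List.cons true)) := by
  ext q
  simp [leafPos]

lemma maxSub_left_eq (A B : Finset (List Bool)) (l : BTree)
    (hB : ∀ s ∈ leafPos l, ((false :: s) ∈ A ↔ s ∈ B)) :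
    maxSub (fun q => decide (q ∈ A)) l [false] = maxSub (fun q => decide (q ∈ B)) l [] := by
  rw [show ([false] : List Bool) = [false] ++ [] from rfl, maxSub_shift]
  apply maxSub_congr
  intro s hs
  simp only [List.nil_append, List.singleton_append]
  simp [hB s hs]

lemma maxSub_right_eq (A C : Finset (List Bool)) (r : BTree)
    (hC : ∀ s ∈ leafPos r, ((true :: s) ∈ A ↔ s ∈ C)) :
    maxSub (fun q => decide (q ∈ A)) r [true] = maxSub (fun q => decide (q ∈ C)) r [] := by
  rw [show ([true] : List Bool) = [true] ++ [] from rfl, maxSub_shift]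
  apply maxSub_congr
  intro s hs
  simp only [List.nil_append, List.singleton_append]
  simp [hC s hs]

lemma quotA_left_eq (A B : Finset (List Bool)) (l : BTree)
    (hB : ∀ s ∈ leafPos l, ((false :: s) ∈ A ↔ s ∈ B)) :
    quotA (fun q => decide (q ∈ A)) l [false] = quotA (fun q => decide (q ∈ B)) l [] := by
  rw [show ([false] : List Bool) = [false] ++ [] from rfl, quotA_shift]
  apply quotA_congr
  intro s hs
  simp only [List.nil_append, List.singleton_append]
  simp [hB s hs]

lemma quotA_right_eq (A C : Finset (List Bool)) (r : BTree)
    (hC : ∀ s ∈ leafPos r, ((true :: s) ∈ A ↔ s ∈ C)) :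
    quotA (fun q => decide (q ∈ A)) r [true] = quotA (fun q => decide (q ∈ C)) r [] := by
  rw [show ([true] : List Bool) = [true] ++ [] from rfl, quotA_shift]
  apply quotA_congr
  intro s hs
  simp only [List.nil_append, List.singleton_append]
  simp [hC s hs]

lemma quotA_node (p : List Bool → Bool) (l r : BTree) :
    quotA p (node l r) [] = comb (quotA p l [false]) (quotA p r [true]) := by
  rw [quotA]
  simp only [List.nil_append]
  cases quotA p l [false] <;> cases quotA p r [true] <;> rfl

lemma maxSub_node_of_ne (A : Finset (List Bool)) (l r : BTree)
    (hA : A ⊆ (leafPos (node l r)).toFinset) (hne : A ≠ (leafPos (node l r)).toFinset) :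
    maxSub (fun q => decide (q ∈ A)) (node l r) [] =
      maxSub (fun q => decide (q ∈ A)) l [false] ++
        maxSub (fun q => decide (q ∈ A)) r [true] := by
  rw [maxSub, if_neg]
  · simp only [List.nil_append]
  · intro hall
    apply hne
    refine Finset.Subset.antisymm hA (fun q hq => ?_)
    have := (List.all_eq_true.mp hall) q (List.mem_toFinset.mp hq)
    simpa using this

lemma maxSub_full (X : BTree) :
    maxSub (fun q => decide (q ∈ (leafPos X).toFinset)) X [] = [X] := by
  apply maxSub_of_true
  intro s hs
  simp [hs]

lemma quotA_full (X : BTree) :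
    quotA (fun q => decide (q ∈ (leafPos X).toFinset)) X [] = none := by
  apply quotA_of_true
  intro s hs
  simp [hs]

lemma maxSub_empty (X : BTree) :
    maxSub (fun q => decide (q ∈ (∅ : Finset (List Bool)))) X [] = [] := by
  apply maxSub_of_false
  intro s hs
  simp

lemma quotA_empty (X : BTree) :
    quotA (fun q => decide (q ∈ (∅ : Finset (List Bool)))) X [] = some X := by
  apply quotA_of_false
  intro s hs
  simp

end Aux
namespace Aux
open BTree

set_option maxHeartbeats 1000000 in
lemma Mlem (Y : BTree) :
    (∑ A ∈ (leafPos Y).toFinset.powerset,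
      Finsupp.single (quotA (fun q => decide (q ∈ A)) Y [])
        (prodF (maxSub (fun q => decide (q ∈ A)) Y []))) =
    Finsupp.single none (Sf Y) - nT Y := by
  induction Y with
  | leaf =>
    have hps : ((leafPos leaf).toFinset : Finset (List Bool)).powerset
        = {∅, {([] : List Bool)}} := by
      rw [show (leafPos leaf).toFinset = {([] : List Bool)} from by simp [leafPos]]
      decide
    rw [hps, Finset.sum_insert (by decide), Finset.sum_singleton]
    rw [maxSub_empty, quotA_empty, prodF_nil]
    have hfull : ({([] : List Bool)} : Finset (List Bool)) = (leafPos leaf).toFinset := by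
      simp [leafPos]
    rw [hfull, maxSub_full, quotA_full, prodF_singleton]
    rw [nT]
    simp only [tc, List.map_cons, List.map_nil, List.sum_cons, List.sum_nil, add_zero]
    rw [show fδ (((leaf, (0 : Multiset BTree)) : BTree × Multiset BTree).2) = 1 from rfl]
    norm_num
    abel
  | node l r ihl ihr =>
    classical
    have hre : (∑ A ∈ (leafPos (node l r)).toFinset.powerset,
        Finsupp.single (quotA (fun q => decide (q ∈ A)) (node l r) [])
          (prodF (maxSub (fun q => decide (q ∈ A)) (node l r) []))) =
      ∑ BC ∈ (leafPos l).toFinset.powerset ×ˢ (leafPos r).toFinset.powerset,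
        (if BC.1 = (leafPos l).toFinset ∧ BC.2 = (leafPos r).toFinset then
          Finsupp.single none (Sf (node l r))
         else B2
           (Finsupp.single (quotA (fun q => decide (q ∈ BC.1)) l [])
              (prodF (maxSub (fun q => decide (q ∈ BC.1)) l [])))
           (Finsupp.single (quotA (fun q => decide (q ∈ BC.2)) r [])
              (prodF (maxSub (fun q => decide (q ∈ BC.2)) r [])))) := by
      refine Finset.sum_nbij'
        (i := fun A => ((leafPos l).toFinset.filter (fun q => (false :: q) ∈ A),
          (leafPos r).toFinset.filter (fun q => (true :: q) ∈ A)))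
        (j := fun BC => BC.1.image (List.cons false) ∪ BC.2.image (List.cons true))
        ?_ ?_ ?_ ?_ ?_
      · intro A _
        simp only [Finset.mem_product, Finset.mem_powerset]
        exact ⟨Finset.filter_subset _ _, Finset.filter_subset _ _⟩
      · intro BC hBC
        simp only [Finset.mem_product, Finset.mem_powerset] at hBC
        rw [Finset.mem_powerset, full_node]
        exact Finset.union_subset_union (Finset.image_subset_image hBC.1)
          (Finset.image_subset_image hBC.2)
      · intro A hA
        rw [Finset.mem_powerset, full_node] at hA
        ext q
        simp only [Finset.mem_union, Finset.mem_image, Finset.mem_filter]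
        constructor
        · rintro (⟨b, ⟨hb1, hb2⟩, rfl⟩ | ⟨c, ⟨hc1, hc2⟩, rfl⟩)
          · exact hb2
          · exact hc2
        · intro hq
          have := hA hq
          simp only [Finset.mem_union, Finset.mem_image] at this
          rcases this with ⟨b, hb, rfl⟩ | ⟨c, hc, rfl⟩
          · exact Or.inl ⟨b, ⟨hb, hq⟩, rfl⟩
          · exact Or.inr ⟨c, ⟨hc, hq⟩, rfl⟩
      · intro BC hBC
        simp only [Finset.mem_product, Finset.mem_powerset] at hBC
        have h1 : (leafPos l).toFinset.filter
            (fun q => (false :: q) ∈ (BC.1.image (List.cons false) ∪ BC.2.image (List.cons true)))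
            = BC.1 := by
          ext q
          simp only [Finset.mem_filter, Finset.mem_union, Finset.mem_image]
          constructor
          · rintro ⟨hq, (⟨b, hb, heq⟩ | ⟨c, hc, heq⟩)⟩
            · obtain rfl : b = q := by injection heq
              exact hb
            · exact absurd heq (by simp)
          · intro hq
            exact ⟨hBC.1 hq, Or.inl ⟨q, hq, rfl⟩⟩
        have h2 : (leafPos r).toFinset.filter
            (fun q => (true :: q) ∈ (BC.1.image (List.cons false) ∪ BC.2.image (List.cons true)))
            = BC.2 := by
          ext q
          simp only [Finset.mem_filter, Finset.mem_union, Finset.mem_image]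
          constructor
          · rintro ⟨hq, (⟨b, hb, heq⟩ | ⟨c, hc, heq⟩)⟩
            · exact absurd heq (by simp)
            · obtain rfl : c = q := by injection heq
              exact hc
          · intro hq
            exact ⟨hBC.2 hq, Or.inr ⟨q, hq, rfl⟩⟩
        exact Prod.ext h1 h2
      · intro A hA
        rw [Finset.mem_powerset] at hA
        have hBiff : ∀ s ∈ leafPos l, ((false :: s) ∈ A ↔
            s ∈ (leafPos l).toFinset.filter (fun q => (false :: q) ∈ A)) := by
          intro s hs
          simp [Finset.mem_filter, List.mem_toFinset, hs]
        have hCiff : ∀ s ∈ leafPos r, ((true :: s) ∈ A ↔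
            s ∈ (leafPos r).toFinset.filter (fun q => (true :: q) ∈ A)) := by
          intro s hs
          simp [Finset.mem_filter, List.mem_toFinset, hs]
        have hquot : quotA (fun q => decide (q ∈ A)) (node l r) []
            = comb (quotA (fun q => decide (q ∈ (leafPos l).toFinset.filter
                  (fun q => (false :: q) ∈ A))) l [])
              (quotA (fun q => decide (q ∈ (leafPos r).toFinset.filter
                  (fun q => (true :: q) ∈ A))) r []) := by
          rw [quotA_node, quotA_left_eq A _ l hBiff, quotA_right_eq A _ r hCiff]
        by_cases hfull : A = (leafPos (node l r)).toFinset
        · have hBfull : (leafPos l).toFinset.filter (fun q => (false :: q) ∈ A)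
              = (leafPos l).toFinset := by
            apply Finset.filter_true_of_mem
            intro q hq
            rw [hfull, List.mem_toFinset]
            exact mem_leafPos_left (List.mem_toFinset.mp hq)
          have hCfull : (leafPos r).toFinset.filter (fun q => (true :: q) ∈ A)
              = (leafPos r).toFinset := by
            apply Finset.filter_true_of_mem
            intro q hq
            rw [hfull, List.mem_toFinset]
            exact mem_leafPos_right (List.mem_toFinset.mp hq)
          simp only [hBfull, hCfull, and_self, if_pos]
          rw [hfull, maxSub_full, quotA_full, prodF_singleton]
        · have hne' : ¬ ((leafPos l).toFinset.filter (fun q => (false :: q) ∈ A)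
              = (leafPos l).toFinset ∧
              (leafPos r).toFinset.filter (fun q => (true :: q) ∈ A)
              = (leafPos r).toFinset) := by
            rintro ⟨hB, hC⟩
            apply hfull
            apply Finset.Subset.antisymm hA
            intro q hq
            rw [full_node] at hq
            simp only [Finset.mem_union, Finset.mem_image] at hq
            rcases hq with ⟨b, hb, rfl⟩ | ⟨c, hc, rfl⟩
            · exact ((hBiff b (List.mem_toFinset.mp hb)).mpr (by rw [hB]; exact hb))
            · exact ((hCiff c (List.mem_toFinset.mp hc)).mpr (by rw [hC]; exact hc))
          rw [if_neg hne']
          rw [maxSub_node_of_ne A l r hA hfull]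
          rw [maxSub_left_eq A _ l hBiff, maxSub_right_eq A _ r hCiff, prodF_append, hquot,
            B2_single_single]
    rw [hre]
    have hmem : (((leafPos l).toFinset, (leafPos r).toFinset) :
        Finset (List Bool) × Finset (List Bool)) ∈
        (leafPos l).toFinset.powerset ×ˢ (leafPos r).toFinset.powerset := by
      simp [Finset.mem_product]
    rw [← Finset.add_sum_erase _ _ hmem]
    rw [if_pos ⟨rfl, rfl⟩]
    have hcongr : ∑ BC ∈ ((leafPos l).toFinset.powerset ×ˢ (leafPos r).toFinset.powerset).erase
          ((leafPos l).toFinset, (leafPos r).toFinset),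
        (if BC.1 = (leafPos l).toFinset ∧ BC.2 = (leafPos r).toFinset then
          Finsupp.single none (Sf (node l r))
         else B2
           (Finsupp.single (quotA (fun q => decide (q ∈ BC.1)) l [])
              (prodF (maxSub (fun q => decide (q ∈ BC.1)) l [])))
           (Finsupp.single (quotA (fun q => decide (q ∈ BC.2)) r [])
              (prodF (maxSub (fun q => decide (q ∈ BC.2)) r []))))
        = ∑ BC ∈ ((leafPos l).toFinset.powerset ×ˢ (leafPos r).toFinset.powerset).erase
          ((leafPos l).toFinset, (leafPos r).toFinset),
          B2 (Finsupp.single (quotA (fun q => decide (q ∈ BC.1)) l [])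
              (prodF (maxSub (fun q => decide (q ∈ BC.1)) l [])))
            (Finsupp.single (quotA (fun q => decide (q ∈ BC.2)) r [])
              (prodF (maxSub (fun q => decide (q ∈ BC.2)) r []))) := by
      apply Finset.sum_congr rfl
      intro BC hBC
      rw [if_neg]
      intro ⟨hB, hC⟩
      exact (Finset.ne_of_mem_erase hBC) (Prod.ext hB hC)
    rw [hcongr]
    have herase : ∑ BC ∈ ((leafPos l).toFinset.powerset ×ˢ (leafPos r).toFinset.powerset).erase
          ((leafPos l).toFinset, (leafPos r).toFinset),
          B2 (Finsupp.single (quotA (fun q => decide (q ∈ BC.1)) l [])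
              (prodF (maxSub (fun q => decide (q ∈ BC.1)) l [])))
            (Finsupp.single (quotA (fun q => decide (q ∈ BC.2)) r [])
              (prodF (maxSub (fun q => decide (q ∈ BC.2)) r [])))
        = (∑ BC ∈ (leafPos l).toFinset.powerset ×ˢ (leafPos r).toFinset.powerset,
          B2 (Finsupp.single (quotA (fun q => decide (q ∈ BC.1)) l [])
              (prodF (maxSub (fun q => decide (q ∈ BC.1)) l [])))
            (Finsupp.single (quotA (fun q => decide (q ∈ BC.2)) r [])
              (prodF (maxSub (fun q => decide (q ∈ BC.2)) r []))))
          - B2 (Finsupp.single (quotA (fun q => decide (q ∈ (leafPos l).toFinset)) l [])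
              (prodF (maxSub (fun q => decide (q ∈ (leafPos l).toFinset)) l [])))
            (Finsupp.single (quotA (fun q => decide (q ∈ (leafPos r).toFinset)) r [])
              (prodF (maxSub (fun q => decide (q ∈ (leafPos r).toFinset)) r []))) := by
      refine eq_sub_of_add_eq ?_
      exact Finset.sum_erase_add ((leafPos l).toFinset.powerset ×ˢ (leafPos r).toFinset.powerset)
        (fun BC => B2 (Finsupp.single (quotA (fun q => decide (q ∈ BC.1)) l [])
              (prodF (maxSub (fun q => decide (q ∈ BC.1)) l [])))
            (Finsupp.single (quotA (fun q => decide (q ∈ BC.2)) r [])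
              (prodF (maxSub (fun q => decide (q ∈ BC.2)) r [])))) hmem
    rw [herase]
    have hprod : (∑ BC ∈ (leafPos l).toFinset.powerset ×ˢ (leafPos r).toFinset.powerset,
          B2 (Finsupp.single (quotA (fun q => decide (q ∈ BC.1)) l [])
              (prodF (maxSub (fun q => decide (q ∈ BC.1)) l [])))
            (Finsupp.single (quotA (fun q => decide (q ∈ BC.2)) r [])
              (prodF (maxSub (fun q => decide (q ∈ BC.2)) r []))))
        = B2 (∑ B ∈ (leafPos l).toFinset.powerset,
            Finsupp.single (quotA (fun q => decide (q ∈ B)) l [])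
              (prodF (maxSub (fun q => decide (q ∈ B)) l [])))
          (∑ C ∈ (leafPos r).toFinset.powerset,
            Finsupp.single (quotA (fun q => decide (q ∈ C)) r [])
              (prodF (maxSub (fun q => decide (q ∈ C)) r []))) := by
      rw [Finset.sum_product]
      have h1 : ∀ B : Finset (List Bool),
          (∑ C ∈ (leafPos r).toFinset.powerset,
            B2 (Finsupp.single (quotA (fun q => decide (q ∈ B)) l [])
                (prodF (maxSub (fun q => decide (q ∈ B)) l [])))
              (Finsupp.single (quotA (fun q => decide (q ∈ C)) r [])
                (prodF (maxSub (fun q => decide (q ∈ C)) r []))))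
          = B2 (Finsupp.single (quotA (fun q => decide (q ∈ B)) l [])
                (prodF (maxSub (fun q => decide (q ∈ B)) l [])))
              (∑ C ∈ (leafPos r).toFinset.powerset,
                Finsupp.single (quotA (fun q => decide (q ∈ C)) r [])
                  (prodF (maxSub (fun q => decide (q ∈ C)) r []))) := by
        intro B
        exact (map_sum (B2r (Finsupp.single (quotA (fun q => decide (q ∈ B)) l [])
            (prodF (maxSub (fun q => decide (q ∈ B)) l []))))
          (fun C => Finsupp.single (quotA (fun q => decide (q ∈ C)) r [])
            (prodF (maxSub (fun q => decide (q ∈ C)) r []))) _).symm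
      rw [Finset.sum_congr rfl (fun B _ => h1 B)]
      exact (map_sum (B2l (∑ C ∈ (leafPos r).toFinset.powerset,
          Finsupp.single (quotA (fun q => decide (q ∈ C)) r [])
            (prodF (maxSub (fun q => decide (q ∈ C)) r []))))
        (fun B => Finsupp.single (quotA (fun q => decide (q ∈ B)) l [])
          (prodF (maxSub (fun q => decide (q ∈ B)) l []))) _).symm
    rw [hprod, ihl, ihr]
    rw [maxSub_full l, quotA_full l, maxSub_full r, quotA_full r, prodF_singleton,
      prodF_singleton, B2_single_single]
    rw [B2_sub_left, B2_sub_right, B2_sub_right, B2_single_single]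
    rw [show comb none none = none from rfl]
    rw [nT_node]
    abel

end Aux
namespace Aux
open BTree

lemma Ef_nT (Y : BTree) : Ef (nT Y) = Sf Y := by
  rw [nT, Sf]
  rw [show Ef (((tc Y).map (fun p =>
      Finsupp.single (some p.1) (((-1 : ℚ) ^ (1 + Multiset.card p.2)) • fδ p.2))).sum)
    = EH (((tc Y).map (fun p =>
      Finsupp.single (some p.1) (((-1 : ℚ) ^ (1 + Multiset.card p.2)) • fδ p.2))).sum) from rfl]
  rw [map_list_sum, List.map_map]
  congr 1
  apply List.map_congr_left
  intro p _
  show Ef (Finsupp.single (some p.1) (((-1 : ℚ) ^ (1 + Multiset.card p.2)) • fδ p.2)) = _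
  rw [Ef_single]
  show (((-1 : ℚ) ^ (1 + Multiset.card p.2)) • fδ p.2) * fδ {p.1} = _
  rw [smul_mul_assoc, ← fδ_add]
  congr 2
  rw [add_comm, Multiset.singleton_add]

lemma countP_card (L : List (List Bool)) (hL : L.Nodup) (A : Finset (List Bool))
    (hA : A ⊆ L.toFinset) : L.countP (fun s => decide (s ∈ A)) = A.card := by
  rw [List.countP_eq_length_filter]
  have hnodup : (L.filter (fun s => decide (s ∈ A))).Nodup := hL.filter _
  have htf : (L.filter (fun s => decide (s ∈ A))).toFinset = A := by
    ext q
    simp only [List.mem_toFinset, List.mem_filter, decide_eq_true_eq]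
    constructor
    · rintro ⟨-, h⟩; exact h
    · intro h
      exact ⟨List.mem_toFinset.mp (hA h), h⟩
  rw [← List.toFinset_card_of_nodup hnodup, htf]

lemma filter_sum_eq (T : BTree) :
    (∑ A ∈ ((leafPos T).toFinset.powerset.filter
        fun A => A ≠ ∅ ∧ A ≠ (leafPos T).toFinset),
      prodF (maxSub (fun q => decide (q ∈ A)) T []) *
        fδ (optForest (quotA (fun q => decide (q ∈ A)) T [])))
    = - fδ {T} - Sf T := by
  classical
  have h0 : (∑ A ∈ (leafPos T).toFinset.powerset,
      prodF (maxSub (fun q => decide (q ∈ A)) T []) *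
        fδ (optForest (quotA (fun q => decide (q ∈ A)) T []))) = 0 := by
    have hm := congrArg Ef (Mlem T)
    rw [show Ef (∑ A ∈ (leafPos T).toFinset.powerset,
        Finsupp.single (quotA (fun q => decide (q ∈ A)) T [])
          (prodF (maxSub (fun q => decide (q ∈ A)) T [])))
      = EH (∑ A ∈ (leafPos T).toFinset.powerset,
        Finsupp.single (quotA (fun q => decide (q ∈ A)) T [])
          (prodF (maxSub (fun q => decide (q ∈ A)) T []))) from rfl] at hm
    rw [map_sum] at hm
    have hterm : ∀ A : Finset (List Bool),
        EH (Finsupp.single (quotA (fun q => decide (q ∈ A)) T [])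
          (prodF (maxSub (fun q => decide (q ∈ A)) T [])))
        = prodF (maxSub (fun q => decide (q ∈ A)) T []) *
            fδ (optForest (quotA (fun q => decide (q ∈ A)) T [])) := fun A => Ef_single _ _
    rw [Finset.sum_congr rfl (fun A _ => hterm A)] at hm
    rw [show Ef ((Finsupp.single none (Sf T)) - nT T)
      = EH ((Finsupp.single none (Sf T)) - nT T) from rfl, map_sub] at hm
    rw [show EH (Finsupp.single none (Sf T)) = Ef (Finsupp.single none (Sf T)) from rfl,
      Ef_single, show EH (nT T) = Ef (nT T) from rfl, Ef_nT] at hm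
    rw [show fδ (optForest none) = 1 from rfl, mul_one, sub_self] at hm
    exact hm
  rw [← Finset.sum_filter_add_sum_filter_not ((leafPos T).toFinset.powerset)
    (fun A => A ≠ ∅ ∧ A ≠ (leafPos T).toFinset)] at h0
  have hcompl : (leafPos T).toFinset.powerset.filter
      (fun A => ¬(A ≠ ∅ ∧ A ≠ (leafPos T).toFinset))
      = {∅, (leafPos T).toFinset} := by
    ext A
    simp only [Finset.mem_filter, Finset.mem_powerset, Finset.mem_insert, Finset.mem_singleton,
      not_and_or, not_not]
    constructor
    · rintro ⟨-, h | h⟩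
      · exact Or.inl h
      · exact Or.inr h
    · rintro (rfl | rfl)
      · exact ⟨Finset.empty_subset _, Or.inl rfl⟩
      · exact ⟨Finset.Subset.refl _, Or.inr rfl⟩
  have hnefull : (∅ : Finset (List Bool)) ≠ (leafPos T).toFinset := by
    intro h
    obtain ⟨s, hs⟩ := List.exists_mem_of_ne_nil _ (leafPos_ne_nil T)
    have : s ∈ (leafPos T).toFinset := List.mem_toFinset.mpr hs
    rw [← h] at this
    simp at this
  rw [hcompl, Finset.sum_pair hnefull] at h0
  rw [maxSub_empty, quotA_empty, prodF_nil, one_mul] at h0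
  rw [maxSub_full, quotA_full, prodF_singleton] at h0
  rw [show fδ (optForest (some T)) = fδ {T} from rfl,
    show fδ (optForest none) = 1 from rfl, mul_one] at h0
  linear_combination h0

end Aux
namespace Aux
open BTree

lemma S_eq_Sf (S : V →ₐ[ℚ] V)
    (hS : ∀ T : BTree,
      S (fδ {T}) = - fδ {T} -
        ∑ A ∈ ((leafPos T).toFinset.powerset.filter
            fun A => A ≠ ∅ ∧ A ≠ (leafPos T).toFinset),
          S (fδ ↑(maxSub (fun q => decide (q ∈ A)) T [])) *
            fδ (optForest (quotA (fun q => decide (q ∈ A)) T [])))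
    (T : BTree) : S (fδ {T}) = Sf T := by
  suffices H : ∀ n, ∀ T : BTree, T.leafCount ≤ n → S (fδ {T}) = Sf T from
    H T.leafCount T le_rfl
  intro n
  induction n with
  | zero =>
    intro T hT
    exact absurd hT (by have := leafCount_pos T; omega)
  | succ n ih =>
    intro T hT
    rw [hS T]
    have hsum : ∀ A ∈ ((leafPos T).toFinset.powerset.filter
        fun A => A ≠ ∅ ∧ A ≠ (leafPos T).toFinset),
        S (fδ ↑(maxSub (fun q => decide (q ∈ A)) T []))
          = prodF (maxSub (fun q => decide (q ∈ A)) T []) := by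
      intro A hA
      simp only [Finset.mem_filter, Finset.mem_powerset] at hA
      obtain ⟨hsub, hne0, hnefull⟩ := hA
      have hcard : A.card < T.leafCount := by
        have hss : A ⊂ (leafPos T).toFinset := ssubset_of_subset_of_ne hsub hnefull
        have h1 := Finset.card_lt_card hss
        have h2 : (leafPos T).toFinset.card = T.leafCount := by
          rw [List.toFinset_card_of_nodup (leafPos_nodup T), leafPos_length]
        omega
      have hsumlc : ((maxSub (fun q => decide (q ∈ A)) T []).map leafCount).sum = A.card := by
        rw [maxSub_sum_leafCount]
        simp only [List.nil_append]
        exact countP_card _ (leafPos_nodup T) A hsub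
      rw [fδ_list, map_list_prod, List.map_map, prodF]
      congr 1
      apply List.map_congr_left
      intro t ht
      have hle : t.leafCount ≤ n := by
        have hmem : t.leafCount ∈ ((maxSub (fun q => decide (q ∈ A)) T []).map leafCount) :=
          List.mem_map_of_mem ht
        have := List.single_le_sum (l := (maxSub (fun q => decide (q ∈ A)) T []).map leafCount)
          (fun x _ => Nat.zero_le x) _ hmem
        omega
      exact ih t hle
    rw [Finset.sum_congr rfl (fun A hA => by rw [hsum A hA])]
    rw [filter_sum_eq]
    abel

lemma Sf_coeff (T : BTree) (m : Multiset BTree) :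
    (Sf T).coeff m
      = ((tc T).countP (fun p => decide (p.1 ::ₘ p.2 = m)) : ℚ) * (-1 : ℚ) ^ (Multiset.card m) := by
  rw [Sf]
  induction (tc T) with
  | nil => simp
  | cons a L ih =>
    simp only [List.map_cons, List.sum_cons, List.countP_cons]
    rw [show (((((-1 : ℚ) ^ (1 + Multiset.card a.2)) • fδ (a.1 ::ₘ a.2)
        + (L.map (fun p => ((-1 : ℚ) ^ (1 + Multiset.card p.2)) • fδ (p.1 ::ₘ p.2))).sum : V)).coeff) m
      = ((((-1 : ℚ) ^ (1 + Multiset.card a.2)) • fδ (a.1 ::ₘ a.2) : V)).coeff m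
        + (((L.map (fun p => ((-1 : ℚ) ^ (1 + Multiset.card p.2)) • fδ (p.1 ::ₘ p.2))).sum : V)).coeff m from rfl]
    rw [ih]
    by_cases h : a.1 ::ₘ a.2 = m
    · have hcard : Multiset.card m = 1 + Multiset.card a.2 := by
        rw [← h, Multiset.card_cons]; omega
      rw [show ((((-1 : ℚ) ^ (1 + Multiset.card a.2)) • fδ (a.1 ::ₘ a.2) : V)).coeff m
        = ((-1 : ℚ) ^ (1 + Multiset.card a.2)) * ((fδ (a.1 ::ₘ a.2)).coeff m)
          from rfl]
      rw [show (fδ (a.1 ::ₘ a.2)).coeff m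
        = (Finsupp.single (a.1 ::ₘ a.2) (1 : ℚ)) m from rfl]
      rw [Finsupp.single_apply, if_pos h, hcard]
      simp [h]
      ring
    · rw [show ((((-1 : ℚ) ^ (1 + Multiset.card a.2)) • fδ (a.1 ::ₘ a.2) : V)).coeff m
        = ((-1 : ℚ) ^ (1 + Multiset.card a.2)) * ((fδ (a.1 ::ₘ a.2)).coeff m)
          from rfl]
      rw [show (fδ (a.1 ::ₘ a.2)).coeff m
        = (Finsupp.single (a.1 ::ₘ a.2) (1 : ℚ)) m from rfl]
      rw [Finsupp.single_apply, if_neg h]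
      simp [h]

lemma count_sum (L : List (BTree × Multiset BTree)) :
    ∑ m ∈ (L.map (fun p => p.1 ::ₘ p.2)).toFinset,
      L.countP (fun p => decide (p.1 ::ₘ p.2 = m)) = L.length := by
  have h1 : ∀ m : Multiset BTree, L.countP (fun p => decide (p.1 ::ₘ p.2 = m))
      = (L.map (fun p => p.1 ::ₘ p.2)).count m := by
    intro m
    rw [List.count, List.countP_map]
    rfl
  simp only [h1]
  have h2 := Multiset.toFinset_sum_count_eq (↑(L.map (fun p => p.1 ::ₘ p.2)) : Multiset (Multiset BTree))
  simpa using h2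

end Aux
open BTree in
theorem antipode_properties' (S : V →ₐ[ℚ] V)
    (hS : ∀ T : BTree,
      S (fδ {T}) = - fδ {T} -
        ∑ A ∈ ((leafPos T).toFinset.powerset.filter
            fun A => A ≠ ∅ ∧ A ≠ (leafPos T).toFinset),
          S (fδ ↑(maxSub (fun q => decide (q ∈ A)) T [])) *
            fδ (optForest (quotA (fun q => decide (q ∈ A)) T [])))
    (T : BTree) (n : ℕ) (h : T.leafCount = n) :
    (∀ m : Multiset BTree, (S (fδ {T})).coeff m ≠ 0 →
      (∃ pc ∈ tc T, Multiset.Rel Iso (pc.1 ::ₘ pc.2) m) ∧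
      0 < (-1 : ℚ) ^ (Multiset.card m) * ((S (fδ {T})).coeff m)) ∧
    (S (fδ {T})).coeff.sum (fun _ c => |c|) = 3 ^ (n - 1) := by
  subst h
  rw [Aux.S_eq_Sf S hS T]
  constructor
  · intro m hm
    rw [Aux.Sf_coeff] at hm
    have hcnt : (tc T).countP (fun p => decide (p.1 ::ₘ p.2 = m)) ≠ 0 := by
      intro hc
      rw [hc] at hm
      simp at hm
    constructor
    · obtain ⟨p, hp, hkey⟩ := List.countP_pos_iff.mp (Nat.pos_of_ne_zero hcnt)
      refine ⟨p, hp, ?_⟩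
      rw [of_decide_eq_true hkey]
      exact Aux.rel_iso_refl m
    · rw [Aux.Sf_coeff]
      have hone : (-1 : ℚ) ^ (Multiset.card m) * (-1 : ℚ) ^ (Multiset.card m) = 1 := by
        rw [← pow_add, show Multiset.card m + Multiset.card m = 2 * Multiset.card m by omega,
          pow_mul]
        norm_num
      have hre : (-1 : ℚ) ^ (Multiset.card m) *
          (((tc T).countP (fun p => decide (p.1 ::ₘ p.2 = m)) : ℚ)
            * (-1 : ℚ) ^ (Multiset.card m))
          = ((tc T).countP (fun p => decide (p.1 ::ₘ p.2 = m)) : ℚ) := by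
        calc (-1 : ℚ) ^ (Multiset.card m) *
            (((tc T).countP (fun p => decide (p.1 ::ₘ p.2 = m)) : ℚ)
              * (-1 : ℚ) ^ (Multiset.card m))
            = ((tc T).countP (fun p => decide (p.1 ::ₘ p.2 = m)) : ℚ)
              * ((-1 : ℚ) ^ (Multiset.card m) * (-1 : ℚ) ^ (Multiset.card m)) := by ring
          _ = ((tc T).countP (fun p => decide (p.1 ::ₘ p.2 = m)) : ℚ) := by
              rw [hone, mul_one]
      rw [hre]
      exact_mod_cast Nat.pos_of_ne_zero hcnt
  · have hdef : (Aux.Sf T).coeff.sum (fun _ c => |c|)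
        = ∑ m ∈ (Aux.Sf T).coeff.support,
            |(Aux.Sf T).coeff m| := rfl
    rw [hdef]
    have hsupp : (Aux.Sf T).coeff.support
        = ((tc T).map (fun p => p.1 ::ₘ p.2)).toFinset := by
      ext m
      rw [Finsupp.mem_support_iff, Aux.Sf_coeff]
      constructor
      · intro hm
        have hcnt : (tc T).countP (fun p => decide (p.1 ::ₘ p.2 = m)) ≠ 0 := by
          intro hc
          rw [hc] at hm
          simp at hm
        obtain ⟨p, hp, hkey⟩ := List.countP_pos_iff.mp (Nat.pos_of_ne_zero hcnt)
        rw [List.mem_toFinset, List.mem_map]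
        exact ⟨p, hp, of_decide_eq_true hkey⟩
      · intro hm
        rw [List.mem_toFinset, List.mem_map] at hm
        obtain ⟨p, hp, hkey⟩ := hm
        have hpos : 0 < (tc T).countP (fun p => decide (p.1 ::ₘ p.2 = m)) :=
          List.countP_pos_iff.mpr ⟨p, hp, decide_eq_true hkey⟩
        intro h0
        rw [mul_eq_zero] at h0
        rcases h0 with h0 | h0
        · rw [Nat.cast_eq_zero] at h0
          omega
        · exact absurd h0 (pow_ne_zero _ (by norm_num))
    rw [hsupp]
    have habs : ∀ m ∈ ((tc T).map (fun p => p.1 ::ₘ p.2)).toFinset,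
        |(Aux.Sf T).coeff m|
          = ((tc T).countP (fun p => decide (p.1 ::ₘ p.2 = m)) : ℚ) := by
      intro m _
      rw [Aux.Sf_coeff, abs_mul, abs_pow, abs_neg, abs_one, one_pow, mul_one, Nat.abs_cast]
    rw [Finset.sum_congr rfl habs, ← Nat.cast_sum, Aux.count_sum, Aux.tc_length]
    push_cast
    ring

open BTree in
/-- Properties of the antipode of the Hopf algebra `H` of binary forests:
if `S` is an algebra endomorphism of `H` satisfying the defining recursion
`S(T) = −T − Σ_{(T)} S(T′)·T″` over the reduced coproduct (indexed by the
proper nonempty subsets `A` of the leaf set, i.e. the nontrivial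
binary-admissible cuts), then for every tree `T` with `n` leaves:
every term of `S(T)` is a forest arising from a binary-total cut of `T`, the
sign of its coefficient is `(−1)^{number of trees in the forest}`, and the sum
of the absolute values of the coefficients of `S(T)` equals `3^{n−1}`. -/
theorem antipode_properties (S : V →ₐ[ℚ] V)
    (hS : ∀ T : BTree,
      S (fδ {T}) = - fδ {T} -
        ∑ A ∈ ((leafPos T).toFinset.powerset.filter
            fun A => A ≠ ∅ ∧ A ≠ (leafPos T).toFinset),
          S (fδ ↑(maxSub (fun q => decide (q ∈ A)) T [])) *
            fδ (optForest (quotA (fun q => decide (q ∈ A)) T [])))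
    (T : BTree) (n : ℕ) (h : T.leafCount = n) :
    (∀ m : Multiset BTree, (S (fδ {T})).coeff m ≠ 0 →
      (∃ pc ∈ tc T, Multiset.Rel Iso (pc.1 ::ₘ pc.2) m) ∧
      0 < (-1 : ℚ) ^ (Multiset.card m) * ((S (fδ {T})).coeff m)) ∧
    (S (fδ {T})).coeff.sum (fun _ c => |c|) = 3 ^ (n - 1) := by
  exact antipode_properties' S hS T n h

end
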